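/- Let A < B, let k = 2m−1 be odd and let Ψ₀,…,Ψ_{2m−2} : [A,B] → ℝ be a Chebyshev system. If σ₁ and σ₂ are finitely supported nonnegative measures on [A,B], each supported on exactly m points including the endpoint A but not B, and ∫_A^B Ψ_i dσ₁ = ∫_A^B Ψ_i dσ₂ for all i = 0,…,2m−2, then σ₁ = σ₂. (Uniqueness of the lower principal representation for odd k.) -/
import Mathlib


open MeasureTheory Set

/-- A family of functions `Ψ₀, …, Ψ_{k-1}` is a Chebyshev system on `[A,B]` if for all
points `A ≤ x₀ < x₁ < ⋯ < x_{k-1} ≤ B` the matrix `(Ψ i (x j))` has positive determinant. -/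
def IsChebyshevSystem (A B : ℝ) {k : ℕ} (Ψ : Fin k → ℝ → ℝ) : Prop :=
  ∀ x : Fin k → ℝ, StrictMono x → (∀ j, x j ∈ Set.Icc A B) →
    0 < (Matrix.of fun i j : Fin k => Ψ i (x j)).det

/-- `σ` is a finitely supported nonnegative measure on `[A,B]`, supported exactly on the
finite set `s ⊆ [A,B]`, i.e. `σ = ∑_{x ∈ s} a_x δ_x` with positive finite weights. -/
def IsAtomicMeasureOn (A B : ℝ) (σ : Measure ℝ) (s : Finset ℝ) : Prop :=
  ↑s ⊆ Set.Icc A B ∧ (∀ x ∈ s, 0 < σ {x} ∧ σ {x} < ⊤) ∧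
    σ = ∑ x ∈ s, σ {x} • Measure.dirac x

lemma atomic_zero_off {A B : ℝ} {σ : Measure ℝ} {s : Finset ℝ}
    (h : IsAtomicMeasureOn A B σ s) {x : ℝ} (hx : x ∉ s) : σ {x} = 0 := by
  conv_lhs => rw [h.2.2]
  rw [Measure.finset_sum_apply]
  refine Finset.sum_eq_zero fun y hy => ?_
  rw [Measure.smul_apply, Measure.dirac_apply,
    Set.indicator_of_notMem (fun h' => hx (by rw [← Set.mem_singleton_iff.1 h']; exact hy)),
    smul_zero]

lemma atomic_integral {A B : ℝ} {σ : Measure ℝ} {s : Finset ℝ}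
    (h : IsAtomicMeasureOn A B σ s) (f : ℝ → ℝ) :
    ∫ x, f x ∂σ = ∑ x ∈ s, (σ {x}).toReal * f x := by
  conv_lhs => rw [h.2.2]
  rw [integral_finset_sum_measure]
  · refine Finset.sum_congr rfl fun x hx => ?_
    rw [integral_smul_measure, integral_dirac, smul_eq_mul]
  · intro x hx
    refine Integrable.smul_measure ?_ (h.2.1 x hx).2.ne
    have hae : f =ᵐ[Measure.dirac x] (fun _ => f x) := by
      rw [ae_dirac_eq]; exact Filter.eventually_pure.2 rfl
    exact (integrable_const (f x)).congr hae.symm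

/-- Uniqueness of the lower principal representation for odd `k = 2m - 1`: two finitely
supported nonnegative measures on `[A,B]`, each supported on exactly `m` points
including `A` but not `B`, with equal moments w.r.t. a Chebyshev system
`Ψ₀,…,Ψ_{2m-2}`, coincide. -/
theorem lower_principal_representation_unique_odd
    {m : ℕ} (hm : 1 ≤ m) (A B : ℝ) (hAB : A < B) (Ψ : Fin (2 * m - 1) → ℝ → ℝ)
    (hcont : ∀ i, ContinuousOn (Ψ i) (Set.Icc A B))
    (hCheb : IsChebyshevSystem A B Ψ)
    (σ₁ σ₂ : Measure ℝ) (s₁ s₂ : Finset ℝ)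
    (h₁ : IsAtomicMeasureOn A B σ₁ s₁) (h₂ : IsAtomicMeasureOn A B σ₂ s₂)
    (hcard₁ : s₁.card = m) (hcard₂ : s₂.card = m)
    (hA₁ : A ∈ s₁) (hB₁ : B ∉ s₁) (hA₂ : A ∈ s₂) (hB₂ : B ∉ s₂)
    (hmom : ∀ i, ∫ x, Ψ i x ∂σ₁ = ∫ x, Ψ i x ∂σ₂) :
    σ₁ = σ₂ := by
  classical
  set u : Finset ℝ := s₁ ∪ s₂ with hu
  set c : ℝ → ℝ := fun x => (σ₁ {x}).toReal - (σ₂ {x}).toReal with hc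
  -- c vanishes off u
  have hc_off : ∀ x ∉ u, c x = 0 := by
    intro x hx
    rw [hu, Finset.mem_union, not_or] at hx
    simp [hc, atomic_zero_off h₁ hx.1, atomic_zero_off h₂ hx.2]
  -- card bound
  have hcardu : u.card ≤ 2 * m - 1 := by
    have h1 : u.card + (s₁ ∩ s₂).card = s₁.card + s₂.card :=
      Finset.card_union_add_card_inter s₁ s₂
    have h2 : 1 ≤ (s₁ ∩ s₂).card :=
      Finset.card_pos.2 ⟨A, Finset.mem_inter.2 ⟨hA₁, hA₂⟩⟩
    omega
  -- extend u to a finset t of card 2m-1 inside Icc A B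
  have huIcc : ↑u ⊆ Set.Icc A B := by
    rw [hu]; push_cast [Finset.coe_union]
    exact Set.union_subset h₁.1 h₂.1
  obtain ⟨s', hus', hs'Icc, hs'card⟩ :=
    (Set.Icc_infinite hAB).exists_superset_ncard_eq (k := 2 * m - 1) huIcc u.finite_toSet
      (by rwa [Set.ncard_coe_finset])
  have hs'fin : s'.Finite := by
    apply Set.finite_of_ncard_ne_zero
    rw [hs'card]; omega
  set t : Finset ℝ := hs'fin.toFinset with ht
  have htcard : t.card = 2 * m - 1 := by
    rw [ht, ← Set.ncard_eq_toFinset_card _ hs'fin, hs'card]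
  have hut : u ⊆ t := fun y hy => by
    rw [ht, Set.Finite.mem_toFinset]; exact hus' hy
  -- enumerate t
  set e := t.orderIsoOfFin htcard with he
  set x : Fin (2 * m - 1) → ℝ := fun j => (e j : ℝ) with hx
  have hxmono : StrictMono x := fun a b hab => by
    exact_mod_cast e.strictMono hab
  have hxmem : ∀ j, x j ∈ Set.Icc A B := fun j =>
    hs'Icc ((Set.Finite.mem_toFinset hs'fin).1 (e j).2)
  -- sums over Fin (2m-1) equal sums over t
  have hsum : ∀ g : ℝ → ℝ, ∑ j : Fin (2 * m - 1), g (x j) = ∑ y ∈ t, g y := by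
    intro g
    rw [← Finset.sum_coe_sort t g]
    exact Fintype.sum_equiv e.toEquiv _ _ (fun j => rfl)
  have hdet : (Matrix.of fun i j : Fin (2 * m - 1) => Ψ i (x j)).det ≠ 0 :=
    ne_of_gt (hCheb x hxmono hxmem)
  have hmv : (Matrix.of fun i j : Fin (2 * m - 1) => Ψ i (x j)).mulVec
      (fun j => c (x j)) = 0 := by
    funext i
    have key : ∑ y ∈ t, Ψ i y * c y = 0 := by
      rw [← Finset.sum_subset hut (fun y _ hy => by rw [hc_off y hy, mul_zero])]
      have e1 : ∑ y ∈ u, Ψ i y * c y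
          = ∑ y ∈ u, (σ₁ {y}).toReal * Ψ i y - ∑ y ∈ u, (σ₂ {y}).toReal * Ψ i y := by
        rw [← Finset.sum_sub_distrib]
        refine Finset.sum_congr rfl fun y _ => by rw [hc]; ring
      have e2 : ∑ y ∈ u, (σ₁ {y}).toReal * Ψ i y = ∫ z, Ψ i z ∂σ₁ := by
        rw [atomic_integral h₁]
        exact (Finset.sum_subset Finset.subset_union_left
          (fun y _ hy => by rw [atomic_zero_off h₁ hy]; simp)).symm
      have e3 : ∑ y ∈ u, (σ₂ {y}).toReal * Ψ i y = ∫ z, Ψ i z ∂σ₂ := by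
        rw [atomic_integral h₂]
        exact (Finset.sum_subset Finset.subset_union_right
          (fun y _ hy => by rw [atomic_zero_off h₂ hy]; simp)).symm
      rw [e1, e2, e3, hmom i, sub_self]
    calc (Matrix.of fun i j : Fin (2 * m - 1) => Ψ i (x j)).mulVec (fun j => c (x j)) i
        = ∑ j : Fin (2 * m - 1), Ψ i (x j) * c (x j) := by
          simp [Matrix.mulVec, dotProduct]
      _ = ∑ y ∈ t, Ψ i y * c y := hsum (fun y => Ψ i y * c y)
      _ = 0 := key
  have hv0 : (fun j => c (x j)) = 0 := Matrix.eq_zero_of_mulVec_eq_zero hdet hmv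
  -- hence c = 0 everywhere
  have hc0 : ∀ y, c y = 0 := by
    intro y
    by_cases hy : y ∈ u
    · have hyt : y ∈ t := hut hy
      have hxy : y = x (e.symm ⟨y, hyt⟩) := by rw [hx]; simp
      rw [hxy]
      exact congrFun hv0 _
    · exact hc_off y hy
  -- finiteness of singleton masses
  have hfin₁ : ∀ y, σ₁ {y} ≠ ⊤ := by
    intro y
    by_cases hy : y ∈ s₁
    · exact (h₁.2.1 y hy).2.ne
    · rw [atomic_zero_off h₁ hy]; simp
  have hfin₂ : ∀ y, σ₂ {y} ≠ ⊤ := by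
    intro y
    by_cases hy : y ∈ s₂
    · exact (h₂.2.1 y hy).2.ne
    · rw [atomic_zero_off h₂ hy]; simp
  have hkey : ∀ y, σ₁ {y} = σ₂ {y} := by
    intro y
    have h0 := hc0 y
    rw [hc, sub_eq_zero] at h0
    exact (ENNReal.toReal_eq_toReal_iff' (hfin₁ y) (hfin₂ y)).1 h0
  -- conclude
  calc σ₁ = ∑ y ∈ s₁, σ₁ {y} • Measure.dirac y := h₁.2.2
    _ = ∑ y ∈ u, σ₁ {y} • Measure.dirac y :=
        Finset.sum_subset Finset.subset_union_left
          (fun y _ hy => by rw [atomic_zero_off h₁ hy, zero_smul])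
    _ = ∑ y ∈ u, σ₂ {y} • Measure.dirac y :=
        Finset.sum_congr rfl fun y _ => by rw [hkey y]
    _ = ∑ y ∈ s₂, σ₂ {y} • Measure.dirac y :=
        (Finset.sum_subset Finset.subset_union_right
          (fun y _ hy => by rw [atomic_zero_off h₂ hy, zero_smul])).symm
    _ = σ₂ := h₂.2.2.symm
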